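/- Let G be a P5-free graph containing an anticomplete pair (A,B) with nonempty A, B such that G[A] and G[B] are connected components of G \ S, where S is a minimal cutset separating A and B in the connected graph G. Then every vertex of S is complete to A or complete to B, and consequently there is a vertex v ∈ S with χ(N_G(v)) ≥ min(χ(A), χ(B)). -/

import Mathlib

open SimpleGraph

/-- The chromatic number of the subgraph of `G` induced on `S`, as a natural number. -/
noncomputable def chiS {V : Type*} [Fintype V] (G : SimpleGraph V) (S : Set V) : ℕ :=
  (G.induce S).chromaticNumber.toNat

/-- A graph is `P5`-free if it has no induced subgraph isomorphic to the five-vertex path. -/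
def P5Free {V : Type*} (G : SimpleGraph V) : Prop :=
  IsEmpty (SimpleGraph.pathGraph 5 ↪g G)

section Aux
variable {V : Type*}

lemma chiS_aux_mono [Fintype V] (G : SimpleGraph V) {X Y : Set V} (h : X ⊆ Y) :
    (G.induce X).chromaticNumber.toNat ≤ (G.induce Y).chromaticNumber.toNat := by
  classical
  have hle := SimpleGraph.chromaticNumber_mono_of_hom (G.induceHomOfLE h).toHom
  have hY : (G.induce Y).chromaticNumber ≠ ⊤ := by
    rw [SimpleGraph.chromaticNumber_ne_top_iff_exists]
    haveI : Fintype ↥Y := Fintype.ofFinite _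
    exact ⟨_, SimpleGraph.colorable_of_fintype _⟩
  exact ENat.toNat_le_toNat hle hY

/-- flip lemma -/
lemma flip_aux {G : SimpleGraph V} {A : Set V} {s : V} :
    ∀ {x y : ↥A}, (G.induce A).Walk x y → G.Adj s x → ¬ G.Adj s y →
    ∃ a1 ∈ A, ∃ a2 ∈ A, G.Adj a1 a2 ∧ G.Adj s a1 ∧ ¬ G.Adj s a2 := by
  intro x y w
  induction w with
  | nil => intro h1 h2; exact absurd h1 h2
  | cons h p ih =>
    intro h1 h2
    rename_i u z _
    by_cases hz : G.Adj s z
    · exact ih hz h2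
    · exact ⟨u, u.2, z, z.2, by simpa using h, h1, hz⟩

/-- cross lemma: any walk avoiding `S \ {s}` from `A` to outside `A` gives a neighbor of `s` in `A`. -/
lemma cross_aux {G : SimpleGraph V} {A S : Set V} {s : V}
    (hAcomp : ∀ a ∈ A, ∀ w, w ∉ S → w ∉ A → ¬ G.Adj a w) :
    ∀ {x y : ↥((S \ {s})ᶜ : Set V)}, (G.induce ((S \ {s})ᶜ : Set V)).Walk x y →
    (x : V) ∈ A → (y : V) ∉ A → ∃ a ∈ A, G.Adj s a := by
  intro x y w
  induction w with
  | nil => intro h1 h2; exact absurd h1 h2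
  | cons h p ih =>
    intro h1 h2
    rename_i u z _
    by_cases hz : (z : V) ∈ A
    · exact ih hz h2
    · have hadj : G.Adj (u : V) (z : V) := by simpa using h
      have hzS : (z : V) ∈ S := by
        by_contra hzS
        exact hAcomp _ h1 _ hzS hz hadj
      have hzs : (z : V) = s := by
        have := z.2
        simp only [Set.mem_compl_iff, Set.mem_diff, Set.mem_singleton_iff, not_and, not_not] at this
        exact this hzS
      refine ⟨u, h1, ?_⟩
      have h' := hadj.symm
      rwa [hzs] at h'

/-- build a P5 from five vertices with the right edges/non-edges. -/
lemma buildP5 {G : SimpleGraph V} (a2 a1 s b1 b2 : V)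
    (e1 : G.Adj a2 a1) (e2 : G.Adj a1 s) (e3 : G.Adj s b1) (e4 : G.Adj b1 b2)
    (n1 : ¬ G.Adj a2 s) (n2 : ¬ G.Adj a2 b1) (n3 : ¬ G.Adj a2 b2)
    (n4 : ¬ G.Adj a1 b1) (n5 : ¬ G.Adj a1 b2) (n6 : ¬ G.Adj s b2) :
    Nonempty (SimpleGraph.pathGraph 5 ↪g G) := by
  have d02 : a2 ≠ s := fun h => n2 (h ▸ e3)
  have d03 : a2 ≠ b1 := fun h => n3 (h ▸ e4)
  have d04 : a2 ≠ b2 := by intro h; rw [h] at n2; exact n2 e4.symm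
  have d13 : a1 ≠ b1 := fun h => n5 (h ▸ e4)
  have d14 : a1 ≠ b2 := by intro h; rw [h] at n4; exact n4 e4.symm
  have d24 : s ≠ b2 := fun h => n5 (h ▸ e2)
  let f : Fin 5 → V := ![a2, a1, s, b1, b2]
  have hinj : Function.Injective f := by
    intro i j hij
    fin_cases i <;> fin_cases j <;>
      simp_all [f, e1.ne, e2.ne, e3.ne, e4.ne, d02, d03, d04, d13, d14, d24,
        e1.ne.symm, e2.ne.symm, e3.ne.symm, e4.ne.symm, d02.symm, d03.symm, d04.symm,
        d13.symm, d14.symm, d24.symm]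
  have m1 : ¬ G.Adj s a2 := fun h => n1 h.symm
  have m2 : ¬ G.Adj b1 a2 := fun h => n2 h.symm
  have m3 : ¬ G.Adj b2 a2 := fun h => n3 h.symm
  have m4 : ¬ G.Adj b1 a1 := fun h => n4 h.symm
  have m5 : ¬ G.Adj b2 a1 := fun h => n5 h.symm
  have m6 : ¬ G.Adj b2 s := fun h => n6 h.symm
  refine ⟨⟨⟨f, hinj⟩, ?_⟩⟩
  intro i j
  fin_cases i <;> fin_cases j <;>
    simp [f, pathGraph_adj, e1, e2, e3, e4, e1.symm, e2.symm, e3.symm, e4.symm,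
      n1, n2, n3, n4, n5, n6,
      show ((0:Fin 5):ℕ) = 0 from rfl, show ((1:Fin 5):ℕ) = 1 from rfl,
      show ((2:Fin 5):ℕ) = 2 from rfl, show ((3:Fin 5):ℕ) = 3 from rfl,
      show ((4:Fin 5):ℕ) = 4 from rfl, m1, m2, m3, m4, m5, m6]

end Aux

theorem stmt_15 {V : Type*} [Fintype V] (G : SimpleGraph V) (hP5 : P5Free G)
    (hconn : G.Connected)
    (A B S : Set V) (hA : A.Nonempty) (hB : B.Nonempty)
    (hAB : Disjoint A B) (hAS : Disjoint A S) (hBS : Disjoint B S)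
    (hanti : ∀ a ∈ A, ∀ b ∈ B, ¬ G.Adj a b)
    -- `S` separates `A` and `B` in `G`
    (hsep : ∀ (a b : ↥(Sᶜ : Set V)), (a : V) ∈ A → (b : V) ∈ B →
      ¬ (G.induce (Sᶜ : Set V)).Reachable a b)
    -- `S` is a minimal such cutset
    (hmin : ∀ S' : Set V, S' ⊂ S →
      ∃ (a b : ↥(S'ᶜ : Set V)), (a : V) ∈ A ∧ (b : V) ∈ B ∧
        (G.induce (S'ᶜ : Set V)).Reachable a b)
    -- `G[A]` and `G[B]` are connected components of `G \ S`
    (hAconn : (G.induce A).Connected) (hBconn : (G.induce B).Connected)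
    (hAcomp : ∀ a ∈ A, ∀ w, w ∉ S → w ∉ A → ¬ G.Adj a w)
    (hBcomp : ∀ b ∈ B, ∀ w, w ∉ S → w ∉ B → ¬ G.Adj b w) :
    (∀ s ∈ S, (∀ a ∈ A, G.Adj s a) ∨ (∀ b ∈ B, G.Adj s b)) ∧
    ∃ v ∈ S, min (chiS G A) (chiS G B) ≤ chiS G (G.neighborSet v) := by
  classical
  obtain ⟨a0, ha0⟩ := hA
  obtain ⟨b0, hb0⟩ := hB
  have key : ∀ s ∈ S, (∀ a ∈ A, G.Adj s a) ∨ (∀ b ∈ B, G.Adj s b) := by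
    intro s hs
    obtain ⟨a, b, haA, hbB, hreach⟩ := hmin (S \ {s}) (Set.sdiff_singleton_ssubset.mpr hs)
    obtain ⟨w⟩ := hreach
    have hnA : ∃ a' ∈ A, G.Adj s a' :=
      cross_aux (A := A) (S := S) (s := s) hAcomp w haA
        (fun h => (hAB.ne_of_mem h hbB) rfl)
    have hnB : ∃ b' ∈ B, G.Adj s b' :=
      cross_aux (A := B) (S := S) (s := s) hBcomp w.reverse hbB
        (fun h => (hAB.ne_of_mem haA h) rfl)
    by_contra hcon
    push_neg at hcon
    obtain ⟨⟨a2, ha2, hna2⟩, ⟨b2, hb2, hnb2⟩⟩ := hcon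
    obtain ⟨a1, ha1, hsa1⟩ := hnA
    obtain ⟨b1, hb1, hsb1⟩ := hnB
    obtain ⟨wa⟩ := hAconn.preconnected ⟨a1, ha1⟩ ⟨a2, ha2⟩
    obtain ⟨wb⟩ := hBconn.preconnected ⟨b1, hb1⟩ ⟨b2, hb2⟩
    obtain ⟨p1, hp1, p2, hp2, hpadj, hsp1, hsp2⟩ := flip_aux wa hsa1 hna2
    obtain ⟨q1, hq1, q2, hq2, hqadj, hsq1, hsq2⟩ := flip_aux wb hsb1 hnb2
    exact hP5.elim (buildP5 p2 p1 s q1 q2 hpadj.symm hsp1.symm hsq1 hqadj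
      (fun h => hsp2 h.symm) (hanti _ hp2 _ hq1) (hanti _ hp2 _ hq2)
      (hanti _ hp1 _ hq1) (hanti _ hp1 _ hq2) hsq2).some
  refine ⟨key, ?_⟩
  have hSne : S.Nonempty := by
    rw [Set.nonempty_iff_ne_empty]
    intro hS
    subst hS
    let hf : G →g G.induce ((∅ : Set V)ᶜ) :=
      ⟨fun v => ⟨v, by simp⟩, fun h => by simpa using h⟩
    exact hsep ⟨a0, by simp⟩ ⟨b0, by simp⟩ ha0 hb0 (by exact (hconn.preconnected a0 b0).map hf)
  obtain ⟨s, hs⟩ := hSne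
  rcases key s hs with h | h
  · refine ⟨s, hs, le_trans (min_le_left _ _) (chiS_aux_mono G ?_)⟩
    intro a ha
    exact h a ha
  · refine ⟨s, hs, le_trans (min_le_right _ _) (chiS_aux_mono G ?_)⟩
    intro b hb
    exact h b hb
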